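/- For any disjoint subsets L, S ⊆ {1,…,n}: Σ_{j ∈ S} (f(L∪{j}) − f(L)) ≥ (1/(2C̃₁)) · Σ_{j ∈ S} (max{(μ − Kζ^L)_j, 0})², where C̃₁ = max_{1≤j≤n} K_{jj}. -/

import Mathlib

open Finset Matrix

noncomputable section

/-- The objective `l(w) = ⟨μ, w⟩ - (1/2) ⟨w, K w⟩`. -/
def obj {n : ℕ} (K : Matrix (Fin n) (Fin n) ℝ) (μ : Fin n → ℝ) (w : Fin n → ℝ) : ℝ :=
  μ ⬝ᵥ w - (1 / 2) * (w ⬝ᵥ (K *ᵥ w))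

/-- The feasible set `Ω_L = {w : w ≥ 0, w_j = 0 for j ∉ L}`. -/
def feas {n : ℕ} (L : Finset (Fin n)) : Set (Fin n → ℝ) :=
  {w | (∀ j, 0 ≤ w j) ∧ ∀ j ∉ L, w j = 0}

lemma obj_add_single {n : ℕ} (K : Matrix (Fin n) (Fin n) ℝ) (hsymm : K.IsSymm)
    (μ : Fin n → ℝ) (w : Fin n → ℝ) (j : Fin n) (t : ℝ) :
    obj K μ (w + t • (Pi.single j 1 : Fin n → ℝ))
      = obj K μ w + t * (μ j - (K *ᵥ w) j) - t ^ 2 / 2 * K j j := by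
  have hsw : w ⬝ᵥ (fun i => K i j * 1) = (K *ᵥ w) j := by
    simp only [dotProduct, mulVec, mul_one]
    exact Finset.sum_congr rfl fun i _ => by
      rw [← hsymm.apply i j]; ring
  simp only [obj, dotProduct_add, add_dotProduct, mulVec_add, mulVec_smul,
    dotProduct_smul, smul_dotProduct, smul_eq_mul, mulVec_single, dotProduct_single,
    single_dotProduct, Pi.smul_apply, Pi.single_eq_same, hsw]
  have hsw' : w ⬝ᵥ K.col j = (K *ᵥ w) j := by
    rw [← hsw]; congr 1; funext i; simp [Matrix.col]
  simp only [MulOpposite.op_one, one_smul, hsw', Matrix.col_apply]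
  simp only [mulVec]
  ring

/-- For disjoint `L, S`:
`∑_{j ∈ S} (f(L∪{j}) - f(L)) ≥ (1/(2 C̃₁)) ∑_{j ∈ S} (max{∇l_j(ζ^L), 0})²`,
where `C̃₁ = max_j K_{jj}`. -/
theorem singleton_gain_lower_bound (n : ℕ) (hn : 1 ≤ n)
    (K : Matrix (Fin n) (Fin n) ℝ) (hsymm : K.IsSymm) (hpd : K.PosDef)
    (μ : Fin n → ℝ)
    (ζ : Finset (Fin n) → Fin n → ℝ)
    (hζ : ∀ L : Finset (Fin n),
      ζ L ∈ feas L ∧ ∀ w ∈ feas L, obj K μ w ≤ obj K μ (ζ L))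
    (f : Finset (Fin n) → ℝ) (hf : ∀ L : Finset (Fin n), f L = obj K μ (ζ L))
    (C₁ : ℝ) (hC₁ub : ∀ j, K j j ≤ C₁) (hC₁mem : ∃ j, C₁ = K j j)
    (L S : Finset (Fin n)) (hdisj : Disjoint L S) :
    ∑ j ∈ S, (f (insert j L) - f L)
      ≥ (1 / (2 * C₁)) * ∑ j ∈ S, (max (μ j - (K *ᵥ ζ L) j) 0) ^ 2 := by
  -- diagonal entries are positive
  have hdiag : ∀ j : Fin n, 0 < K j j := by
    intro j
    have := hpd.dotProduct_mulVec_pos (x := Pi.single j 1) (by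
      intro h
      have := congrFun h j
      simp at this)
    simpa [dotProduct_single, Pi.single_apply] using this
  have hC₁pos : 0 < C₁ := by
    obtain ⟨j, hj⟩ := hC₁mem
    rw [hj]; exact hdiag j
  rw [Finset.mul_sum, ge_iff_le]
  apply Finset.sum_le_sum
  intro j hjS
  have hjL : j ∉ L := fun h => (Finset.disjoint_left.mp hdisj h) hjS
  set g : ℝ := μ j - (K *ᵥ ζ L) j with hg
  set m : ℝ := max g 0 with hm
  have hm0 : 0 ≤ m := le_max_right _ _
  have hmg : m * g = m ^ 2 := by
    rcases le_or_gt g 0 with h | h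
    · have : m = 0 := max_eq_right h
      simp [this]
    · have : m = g := max_eq_left h.le
      rw [this]; ring
  set t : ℝ := m / K j j with ht
  have ht0 : 0 ≤ t := div_nonneg hm0 (hdiag j).le
  -- the candidate point is feasible for insert j L
  have hfeas : ζ L + t • (Pi.single j 1 : Fin n → ℝ) ∈ feas (insert j L) := by
    obtain ⟨hpos, hzero⟩ := (hζ L).1
    constructor
    · intro i
      have : 0 ≤ (t • (Pi.single j 1 : Fin n → ℝ)) i := by
        rcases eq_or_ne i j with rfl | h
        · simp [ht0]
        · simp [Pi.single_apply, h]
      exact add_nonneg (hpos i) this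
    · intro i hi
      have hij : i ≠ j := fun h => hi (h ▸ Finset.mem_insert_self j L)
      have hiL : i ∉ L := fun h => hi (Finset.mem_insert_of_mem h)
      simp [hzero i hiL, Pi.single_apply, hij]
  have key : obj K μ (ζ L + t • (Pi.single j 1 : Fin n → ℝ)) ≤ f (insert j L) := by
    rw [hf]
    exact (hζ (insert j L)).2 _ hfeas
  rw [obj_add_single K hsymm μ (ζ L) j t] at key
  have hstep : t * g - t ^ 2 / 2 * K j j = m ^ 2 / (2 * K j j) := by
    have hK := (hdiag j).ne'
    rw [ht]
    field_simp
    linear_combination 2 * hmg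
  have hbound : m ^ 2 / (2 * K j j) ≥ 1 / (2 * C₁) * m ^ 2 := by
    rw [div_eq_mul_one_div, mul_comm]
    apply mul_le_mul_of_nonneg_right _ (sq_nonneg m)
    apply one_div_le_one_div_of_le (by linarith [hdiag j])
    linarith [hC₁ub j]
  have : f L + (1 / (2 * C₁)) * m ^ 2 ≤ f (insert j L) := by
    calc f L + (1 / (2 * C₁)) * m ^ 2
        ≤ f L + m ^ 2 / (2 * K j j) := by linarith
      _ = obj K μ (ζ L) + (t * g - t ^ 2 / 2 * K j j) := by rw [hf, hstep]
      _ ≤ f (insert j L) := by linarith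
  linarith
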